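/- arXiv:1710.06367 — 2 statements merged into one kernel-verified Lean document; each statement's English description precedes it below -/
import Mathlib

section
/- Let H be a directed m-uniform hypergraph on n vertices. Then the Laplacian hypermatrix L_H = L_H⁺ + L_H⁻ is copositive: L_H x^m ≥ 0 for every x ∈ ℝⁿ with all entries nonnegative. -/
open Finset

/-- `(A x^{m-1})_i` for a real order-`m` dimension-`n` hypermatrix `A`
and a real vector `x`. -/
noncomputable def hmApply {m n : ℕ} (hm : 0 < m) (A : (Fin m → Fin n) → ℝ)
    (x : Fin n → ℝ) (i : Fin n) : ℝ :=
  ∑ f ∈ Finset.univ.filter (fun f : Fin m → Fin n => f ⟨0, hm⟩ = i),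
    A f * ∏ j ∈ Finset.univ.filter (fun j : Fin m => j ≠ ⟨0, hm⟩), x (f j)

/-- `(A x^{m-1})_i` for a real hypermatrix `A` and a complex vector `x`. -/
noncomputable def hmApplyC {m n : ℕ} (hm : 0 < m) (A : (Fin m → Fin n) → ℝ)
    (x : Fin n → ℂ) (i : Fin n) : ℂ :=
  ∑ f ∈ Finset.univ.filter (fun f : Fin m → Fin n => f ⟨0, hm⟩ = i),
    (A f : ℂ) * ∏ j ∈ Finset.univ.filter (fun j : Fin m => j ≠ ⟨0, hm⟩), x (f j)

/-- `A x^m`, the homogeneous form associated with a hypermatrix. -/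
noncomputable def formEval {m n : ℕ} (A : (Fin m → Fin n) → ℝ) (x : Fin n → ℝ) : ℝ :=
  ∑ f : Fin m → Fin n, A f * ∏ j, x (f j)

/-- `lam ∈ ℂ` is an eigenvalue of `A`:  there is a nonzero complex vector `x` with
`(A x^{m-1})_i = lam * x_i^{m-1}` for all `i`. -/
def IsEigenvalue {m n : ℕ} (hm : 0 < m) (A : (Fin m → Fin n) → ℝ) (lam : ℂ) : Prop :=
  ∃ x : Fin n → ℂ, x ≠ 0 ∧ ∀ i, hmApplyC hm A x i = lam * (x i) ^ (m - 1)

/-- `(lam, x)` is an H-eigenpair of `A` (both real). -/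
def IsHEigenpair {m n : ℕ} (hm : 0 < m) (A : (Fin m → Fin n) → ℝ)
    (lam : ℝ) (x : Fin n → ℝ) : Prop :=
  x ≠ 0 ∧ ∀ i, hmApply hm A x i = lam * (x i) ^ (m - 1)

/-- `(lam, x)` is a Z-eigenpair of `A`:  `A x^{m-1} = lam x` and `∑ x_i² = 1`. -/
def IsZEigenpair {m n : ℕ} (hm : 0 < m) (A : (Fin m → Fin n) → ℝ)
    (lam : ℝ) (x : Fin n → ℝ) : Prop :=
  (∀ i, hmApply hm A x i = lam * x i) ∧ ∑ i, (x i) ^ 2 = 1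

/-- The spectral radius of `A`: the largest modulus of an eigenvalue. -/
noncomputable def specRad {m n : ℕ} (hm : 0 < m) (A : (Fin m → Fin n) → ℝ) : ℝ :=
  sSup {r : ℝ | ∃ lam : ℂ, IsEigenvalue hm A lam ∧ r = ‖lam‖}

/-- The largest Z-eigenvalue of `A`. -/
noncomputable def zMax {m n : ℕ} (hm : 0 < m) (A : (Fin m → Fin n) → ℝ) : ℝ :=
  sSup {lam : ℝ | ∃ x : Fin n → ℝ, IsZEigenpair hm A lam x}

/-- `A` is copositive: `A x^m ≥ 0` for every entrywise nonnegative real `x`. -/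
def Copositive {m n : ℕ} (A : (Fin m → Fin n) → ℝ) : Prop :=
  ∀ x : Fin n → ℝ, (∀ i, 0 ≤ x i) → 0 ≤ formEval A x

/-- A directed hypergraph on vertex set `Fin n`: each edge is a pair
(tail, head) of disjoint nonempty vertex sets, and distinct edges have
distinct vertex sets. -/
structure DirHypergraph (n : ℕ) where
  edges : Finset (Finset (Fin n) × Finset (Fin n))
  tail_nonempty : ∀ e ∈ edges, e.1.Nonempty
  head_nonempty : ∀ e ∈ edges, e.2.Nonempty
  tail_head_disjoint : ∀ e ∈ edges, Disjoint e.1 e.2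
  union_injective : ∀ e ∈ edges, ∀ e' ∈ edges, e.1 ∪ e.2 = e'.1 ∪ e'.2 → e = e'

namespace DirHypergraph

variable {n : ℕ}

/-- `H` is `m`-uniform. -/
def IsUniform (H : DirHypergraph n) (m : ℕ) : Prop :=
  ∀ e ∈ H.edges, (e.1 ∪ e.2).card = m

/-- `H` is non-uniform: it has two edges of different cardinalities. -/
def NonUniform (H : DirHypergraph n) : Prop :=
  ∃ e ∈ H.edges, ∃ e' ∈ H.edges, (e.1 ∪ e.2).card ≠ (e'.1 ∪ e'.2).card

/-- `m = m.c.e.(H)`, the maximum cardinality of an edge (the rank of `H`). -/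
def mce (H : DirHypergraph n) (m : ℕ) : Prop :=
  (∀ e ∈ H.edges, (e.1 ∪ e.2).card ≤ m) ∧ ∃ e ∈ H.edges, (e.1 ∪ e.2).card = m

/-- `c = corank(H)`, the minimum cardinality of an edge. -/
def corank (H : DirHypergraph n) (c : ℕ) : Prop :=
  (∀ e ∈ H.edges, c ≤ (e.1 ∪ e.2).card) ∧ ∃ e ∈ H.edges, (e.1 ∪ e.2).card = c

end DirHypergraph

variable {n : ℕ}

/-- Out-degree of a vertex. -/
def outDeg (H : DirHypergraph n) (v : Fin n) : ℕ :=
  (H.edges.filter (fun e => v ∈ e.1)).card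

/-- In-degree of a vertex. -/
def inDeg (H : DirHypergraph n) (v : Fin n) : ℕ :=
  (H.edges.filter (fun e => v ∈ e.2)).card

/-- Degree of a vertex in the underlying undirected hypergraph. -/
def undDeg (H : DirHypergraph n) (v : Fin n) : ℕ :=
  (H.edges.filter (fun e => v ∈ e.1 ∪ e.2)).card

/-- The maximum out-degree `Δ⁺`. -/
noncomputable def maxOutDeg (H : DirHypergraph n) : ℝ :=
  sSup (Set.range fun v => (outDeg H v : ℝ))

/-- The minimum out-degree `δ⁺`. -/
noncomputable def minOutDeg (H : DirHypergraph n) : ℝ :=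
  sInf (Set.range fun v => (outDeg H v : ℝ))

/-- The out-adjacency hypermatrix of a directed `m`-uniform hypergraph:
the entry at the tuple `f = (i₁, …, i_m)` is `1/((m-k)!(k-1)!)` when, for some
edge `e` with `k = |T_e|`, the first `k` indices are exactly the distinct
elements of `T_e` and the last `m - k` indices are exactly the distinct
elements of `H_e`; all other entries are zero. -/
noncomputable def outAdj (m : ℕ) (H : DirHypergraph n) (f : Fin m → Fin n) : ℝ :=
  ∑ e ∈ H.edges,
    if ((Finset.univ.filter fun j : Fin m => (j : ℕ) < e.1.card).image f = e.1 ∧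
        (Finset.univ.filter fun j : Fin m => e.1.card ≤ (j : ℕ)).image f = e.2)
    then (1 : ℝ) / ((((m - e.1.card).factorial * (e.1.card - 1).factorial : ℕ)) : ℝ)
    else 0

/-- The in-adjacency hypermatrix of a directed `m`-uniform hypergraph. -/
noncomputable def inAdj (m : ℕ) (H : DirHypergraph n) (f : Fin m → Fin n) : ℝ :=
  ∑ e ∈ H.edges,
    if ((Finset.univ.filter fun j : Fin m => (j : ℕ) < m - e.1.card).image f = e.2 ∧
        (Finset.univ.filter fun j : Fin m => m - e.1.card ≤ (j : ℕ)).image f = e.1)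
    then (1 : ℝ) / ((((m - e.1.card - 1).factorial * (e.1.card).factorial : ℕ)) : ℝ)
    else 0

/-- The adjacency hypermatrix of the underlying undirected hypergraph `H_D`. -/
noncomputable def undAdj (m : ℕ) (H : DirHypergraph n) (f : Fin m → Fin n) : ℝ :=
  ∑ e ∈ H.edges,
    if (Function.Injective f ∧ Finset.univ.image f = e.1 ∪ e.2)
    then (1 : ℝ) / (((m - 1).factorial : ℕ) : ℝ)
    else 0

/-- The supersymmetric hypermatrix `B` with `b_{i₁…i_m} = |T_e|/m!` whenever
`i₁, …, i_m` are distinct and `{i₁, …, i_m} = T_e ∪ H_e` for an edge `e`. -/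
noncomputable def symB (m : ℕ) (H : DirHypergraph n) (f : Fin m → Fin n) : ℝ :=
  ∑ e ∈ H.edges,
    if (Function.Injective f ∧ Finset.univ.image f = e.1 ∪ e.2)
    then (e.1.card : ℝ) / (m.factorial : ℝ)
    else 0

/-- The order-`m` diagonal hypermatrix with diagonal entries `d`. -/
noncomputable def diagHM (m : ℕ) (d : Fin n → ℝ) (f : Fin m → Fin n) : ℝ :=
  ∑ i : Fin n, if f = (fun _ => i) then d i else 0

/-- The normalizing constant `α` in the definition of the out-adjacency
hypermatrix of a general (non-uniform) directed hypergraph, for an edge with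
tail of size `k` and `s` vertices in total, inside a rank-`m` hypergraph. -/
def alphaVal (m k s : ℕ) : ℕ :=
  ∑ r ∈ Finset.range (m - s + 1),
    (∑ t ∈ (Finset.Nat.antidiagonalTuple k (r + k)).filter (fun t => ∀ i, 1 ≤ t i),
        Nat.multinomial Finset.univ t) *
    (∑ t ∈ (Finset.Nat.antidiagonalTuple (s - k) (m - k - r)).filter (fun t => ∀ i, 1 ≤ t i),
        Nat.multinomial Finset.univ t)

/-- The out-adjacency hypermatrix of a general directed (non-uniform)
hypergraph of rank `m`:  the entry at `f = (p₁, …, p_m)` is `k/α` when for some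
edge `e` (with `|T_e| = k`, `|T_e ∪ H_e| = s`) and some `t` with
`k ≤ t ≤ m - s + k`, the first `t` indices all lie in `T_e`, covering it, and
the remaining indices all lie in `H_e`, covering it; other entries are zero. -/
noncomputable def outAdjNU (m : ℕ) (H : DirHypergraph n) (f : Fin m → Fin n) : ℝ :=
  ∑ e ∈ H.edges,
    ∑ t ∈ Finset.Icc e.1.card (m - (e.1.card + e.2.card) + e.1.card),
      if ((Finset.univ.filter fun j : Fin m => (j : ℕ) < t).image f = e.1 ∧
          (Finset.univ.filter fun j : Fin m => t ≤ (j : ℕ)).image f = e.2)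
      then (e.1.card : ℝ) / (alphaVal m e.1.card (e.1.card + e.2.card) : ℝ)
      else 0


lemma card_filter_lt_fin (m k : ℕ) (h : k ≤ m) :
    ((univ : Finset (Fin m)).filter (fun j : Fin m => (j : ℕ) < k)).card = k := by
  have : ((univ : Finset (Fin m)).filter (fun j : Fin m => (j : ℕ) < k))
      = (univ : Finset (Fin k)).image (Fin.castLE h) := by
    ext j
    simp only [mem_filter, mem_univ, true_and, mem_image]
    constructor
    · intro hj; exact ⟨⟨j, hj⟩, rfl⟩
    · rintro ⟨i, rfl⟩; exact i.2
  rw [this, Finset.card_image_of_injective _ (Fin.castLE_injective h), card_univ, Fintype.card_fin]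

lemma filter_ge_eq_compl (m k : ℕ) :
    ((univ : Finset (Fin m)).filter (fun j : Fin m => k ≤ (j : ℕ)))
      = ((univ : Finset (Fin m)).filter (fun j : Fin m => (j : ℕ) < k))ᶜ := by
  ext j; simp [not_lt]

-- AM-GM
lemma amgm_card {n : ℕ} (s : Finset (Fin n)) (x : Fin n → ℝ) (hx : ∀ i, 0 ≤ x i) :
    (s.card : ℝ) * ∏ v ∈ s, x v ≤ ∑ v ∈ s, x v ^ s.card := by
  rcases s.eq_empty_or_nonempty with rfl | hs
  · simp
  have hc : 0 < (s.card : ℝ) := by exact_mod_cast Finset.card_pos.mpr hs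
  have key := Real.geom_mean_le_arith_mean_weighted s (fun _ => 1 / (s.card:ℝ))
      (fun v => x v ^ s.card) (fun i _ => by positivity)
      (by rw [Finset.sum_const, nsmul_eq_mul]; field_simp) (fun i _ => pow_nonneg (hx i) _)
  have hprod : ∏ i ∈ s, (x i ^ s.card) ^ (1 / (s.card : ℝ)) = ∏ i ∈ s, x i := by
    refine Finset.prod_congr rfl fun i _ => ?_
    rw [← Real.rpow_natCast (x i) s.card, ← Real.rpow_mul (hx i)]
    rw [mul_one_div, div_self hc.ne', Real.rpow_one]
  rw [hprod] at key
  have : ∑ i ∈ s, 1 / (s.card : ℝ) * x i ^ s.card = (1 / s.card) * ∑ i ∈ s, x i ^ s.card := by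
    rw [Finset.mul_sum]
  rw [this] at key
  calc (s.card : ℝ) * ∏ v ∈ s, x v ≤ (s.card : ℝ) * ((1 / s.card) * ∑ i ∈ s, x i ^ s.card) := by
        exact mul_le_mul_of_nonneg_left key hc.le
    _ = ∑ v ∈ s, x v ^ s.card := by field_simp


private noncomputable def mkEquiv {m n : ℕ} (G : Finset (Fin m)) (T : Finset (Fin n)) (hGT : G.card = T.card)
    (f : Fin m → Fin n) (hf : G.image f = T) : (↥G ≃ ↥T) := by
  have hinj : Set.InjOn f G := by
    refine Finset.card_image_iff.mp ?_; rw [hf, ← hGT]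
  refine Equiv.ofBijective (fun j => ⟨f j, by rw [← hf]; exact Finset.mem_image_of_mem f j.2⟩) ?_
  rw [Fintype.bijective_iff_injective_and_card]
  constructor
  · intro a b hab
    exact Subtype.ext (hinj a.2 b.2 (congrArg Subtype.val hab))
  · simp [hGT]

@[simp] private lemma mkEquiv_apply {m n : ℕ} (G : Finset (Fin m)) (T : Finset (Fin n))
    (hGT : G.card = T.card) (f : Fin m → Fin n) (hf : G.image f = T) (j : ↥G) :
    (mkEquiv G T hGT f hf j : Fin n) = f j := rfl

/-- Number of `f : Fin m → Fin n` whose restriction to `F` bijects onto `A`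
and restriction to `Fᶜ` bijects onto `B`. -/
lemma card_pair_bij {m n : ℕ} (F : Finset (Fin m)) (A B : Finset (Fin n))
    (hA : F.card = A.card) (hB : Fᶜ.card = B.card) :
    ((univ : Finset (Fin m → Fin n)).filter
      (fun f => F.image f = A ∧ Fᶜ.image f = B)).card
      = Nat.factorial A.card * Nat.factorial B.card := by
  classical
  have e : {f : Fin m → Fin n // F.image f = A ∧ Fᶜ.image f = B} ≃
      ((↥F ≃ ↥A) × (↥Fᶜ ≃ ↥B)) := by
    refine
      { toFun := fun f => (mkEquiv F A hA f.1 f.2.1, mkEquiv Fᶜ B hB f.1 f.2.2)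
        invFun := fun p => ⟨fun j => if h : j ∈ F then (p.1 ⟨j, h⟩ : Fin n)
            else (p.2 ⟨j, Finset.mem_compl.mpr h⟩ : Fin n), ?_, ?_⟩
        left_inv := ?_
        right_inv := ?_ }
    · -- image over F is A
      ext a
      simp only [Finset.mem_image]
      constructor
      · rintro ⟨j, hj, rfl⟩
        rw [dif_pos hj]
        exact (p.1 ⟨j, hj⟩).2
      · intro ha
        refine ⟨(p.1.symm ⟨a, ha⟩ : Fin m), (p.1.symm ⟨a, ha⟩).2, ?_⟩
        rw [dif_pos (p.1.symm ⟨a, ha⟩).2]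
        simp
    · ext b
      simp only [Finset.mem_image]
      constructor
      · rintro ⟨j, hj, rfl⟩
        rw [dif_neg (Finset.mem_compl.mp hj)]
        exact (p.2 ⟨j, hj⟩).2
      · intro hb
        refine ⟨(p.2.symm ⟨b, hb⟩ : Fin m), (p.2.symm ⟨b, hb⟩).2, ?_⟩
        rw [dif_neg (Finset.mem_compl.mp (p.2.symm ⟨b, hb⟩).2)]
        simp
    · rintro ⟨f, hf1, hf2⟩
      ext j
      by_cases h : j ∈ F
      · simp [dif_pos h]
      · simp [dif_neg h]
    · rintro ⟨p1, p2⟩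
      refine Prod.ext ?_ ?_
      · ext j
        simp [dif_pos j.2]
      · ext j
        simp [dif_neg (Finset.mem_compl.mp j.2)]
  have h1 : Fintype.card {f : Fin m → Fin n // F.image f = A ∧ Fᶜ.image f = B}
      = Nat.factorial A.card * Nat.factorial B.card := by
    rw [Fintype.card_congr e, Fintype.card_prod]
    have eA : ↥F ≃ ↥A := Fintype.equivOfCardEq (by rw [Fintype.card_coe, Fintype.card_coe, hA])
    have eB : ↥Fᶜ ≃ ↥B := Fintype.equivOfCardEq (by rw [Fintype.card_coe, Fintype.card_coe, hB])
    rw [Fintype.card_equiv eA, Fintype.card_equiv eB, Fintype.card_coe, Fintype.card_coe, hA, hB]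
  rw [← h1, Fintype.card_subtype]

lemma formEval_diag {m n : ℕ} (d : Fin n → ℝ) (x : Fin n → ℝ) :
    formEval (diagHM m d) x = ∑ i, d i * x i ^ m := by
  unfold formEval diagHM
  simp only [Finset.sum_mul, ite_mul, zero_mul]
  rw [Finset.sum_comm]
  refine Finset.sum_congr rfl fun i _ => ?_
  rw [Finset.sum_ite_eq' Finset.univ (fun _ => i) (fun f => d i * ∏ j, x (f j))]
  simp [Finset.prod_const]

lemma edge_term {m n : ℕ} (F : Finset (Fin m)) (A B : Finset (Fin n)) (hA : F.card = A.card)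
    (hB : Fᶜ.card = B.card) (hAB : Disjoint A B) (w : ℝ) (x : Fin n → ℝ) :
    ∑ f : Fin m → Fin n, (if (F.image f = A ∧ Fᶜ.image f = B) then w else 0) * ∏ j, x (f j)
      = ((Nat.factorial A.card * Nat.factorial B.card : ℕ) : ℝ) * (w * ∏ v ∈ A ∪ B, x v) := by
  classical
  simp only [ite_mul, zero_mul]
  rw [← Finset.sum_filter]
  have hconst : ∀ f ∈ (univ : Finset (Fin m → Fin n)).filter
      (fun f => F.image f = A ∧ Fᶜ.image f = B),
      w * ∏ j, x (f j) = w * ∏ v ∈ A ∪ B, x v := by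
    intro f hf
    rw [Finset.mem_filter] at hf
    obtain ⟨-, hf1, hf2⟩ := hf
    have hinj1 : ∀ a ∈ F, ∀ b ∈ F, f a = f b → a = b := by
      have := Finset.card_image_iff.mp (by rw [hf1, ← hA] : (F.image f).card = F.card)
      intro a ha b hb; exact fun h => this ha hb h
    have hinj2 : ∀ a ∈ Fᶜ, ∀ b ∈ Fᶜ, f a = f b → a = b := by
      have := Finset.card_image_iff.mp (by rw [hf2, ← hB] : (Fᶜ.image f).card = Fᶜ.card)
      intro a ha b hb; exact fun h => this ha hb h
    have hsplit : ∏ j, x (f j) = (∏ j ∈ F, x (f j)) * ∏ j ∈ Fᶜ, x (f j) := by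
      rw [← Finset.prod_union disjoint_compl_right, Finset.union_compl]
    rw [hsplit, ← Finset.prod_image hinj1, ← Finset.prod_image hinj2, hf1, hf2]
    rw [Finset.prod_union hAB]
  rw [Finset.sum_congr rfl hconst, Finset.sum_const, card_pair_bij F A B hA hB, nsmul_eq_mul]

lemma deg_sum {n : ℕ} (m : ℕ) (H : DirHypergraph n)
    (p : Finset (Fin n) × Finset (Fin n) → Finset (Fin n)) (x : Fin n → ℝ) :
    ∑ i, ((H.edges.filter (fun e => i ∈ p e)).card : ℝ) * x i ^ m
      = ∑ e ∈ H.edges, ∑ v ∈ p e, x v ^ m := by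
  classical
  simp only [Finset.card_filter]
  push_cast
  simp only [Finset.sum_mul, ite_mul, one_mul, zero_mul]
  rw [Finset.sum_comm]
  refine Finset.sum_congr rfl fun e _ => ?_
  rw [Finset.sum_ite_mem, Finset.univ_inter]

lemma formEval_outAdj {m n : ℕ} (H : DirHypergraph n) (hH : H.IsUniform m) (x : Fin n → ℝ) :
    formEval (outAdj m H) x
      = ∑ e ∈ H.edges, (e.1.card : ℝ) * ∏ v ∈ e.1 ∪ e.2, x v := by
  classical
  unfold formEval outAdj
  simp only [Finset.sum_mul]
  rw [Finset.sum_comm]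
  refine Finset.sum_congr rfl fun e he => ?_
  have hdis := H.tail_head_disjoint e he
  have hm : e.1.card + e.2.card = m := by
    rw [← Finset.card_union_of_disjoint hdis]; exact hH e he
  have hk1 : 1 ≤ e.1.card := Finset.card_pos.mpr (H.tail_nonempty e he)
  have hkm : e.1.card ≤ m := hm ▸ Nat.le_add_right _ _
  have hF : ((univ : Finset (Fin m)).filter (fun j : Fin m => (j : ℕ) < e.1.card)).card
      = e.1.card := card_filter_lt_fin m e.1.card hkm
  have hFc : ((univ : Finset (Fin m)).filter (fun j : Fin m => (j : ℕ) < e.1.card))ᶜ.card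
      = e.2.card := by
    rw [Finset.card_compl, hF, Fintype.card_fin, ← hm, Nat.add_sub_cancel_left]
  rw [filter_ge_eq_compl m e.1.card]
  rw [edge_term _ e.1 e.2 hF hFc hdis _ x]
  have he2 : e.2.card = m - e.1.card := by omega
  have hfac : Nat.factorial e.1.card = e.1.card * Nat.factorial (e.1.card - 1) :=
    (Nat.mul_factorial_pred (by omega)).symm
  rw [he2, hfac]
  have h1 : ((Nat.factorial (m - e.1.card) : ℕ) : ℝ) ≠ 0 := by
    exact_mod_cast (Nat.factorial_pos _).ne'
  have h2 : ((Nat.factorial (e.1.card - 1) : ℕ) : ℝ) ≠ 0 := by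
    exact_mod_cast (Nat.factorial_pos _).ne'
  push_cast
  generalize (((m - e.1.card).factorial : ℕ) : ℝ) = c at h1 ⊢
  generalize (((e.1.card - 1).factorial : ℕ) : ℝ) = b at h2 ⊢
  generalize ∏ v ∈ e.1 ∪ e.2, x v = P
  rw [show (e.1.card : ℝ) * b * c * (1 / (c * b) * P) = e.1.card * P * (b * b⁻¹) * (c * c⁻¹) by ring,
    mul_inv_cancel₀ h1, mul_inv_cancel₀ h2]
  ring

lemma formEval_inAdj {m n : ℕ} (H : DirHypergraph n) (hH : H.IsUniform m) (x : Fin n → ℝ) :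
    formEval (inAdj m H) x
      = ∑ e ∈ H.edges, (e.2.card : ℝ) * ∏ v ∈ e.1 ∪ e.2, x v := by
  classical
  unfold formEval inAdj
  simp only [Finset.sum_mul]
  rw [Finset.sum_comm]
  refine Finset.sum_congr rfl fun e he => ?_
  have hdis := H.tail_head_disjoint e he
  have hm : e.1.card + e.2.card = m := by
    rw [← Finset.card_union_of_disjoint hdis]; exact hH e he
  have hk1 : 1 ≤ e.1.card := Finset.card_pos.mpr (H.tail_nonempty e he)
  have hk2 : 1 ≤ e.2.card := Finset.card_pos.mpr (H.head_nonempty e he)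
  have hkm : e.1.card ≤ m := hm ▸ Nat.le_add_right _ _
  have he2 : m - e.1.card = e.2.card := by omega
  have hF : ((univ : Finset (Fin m)).filter (fun j : Fin m => (j : ℕ) < m - e.1.card)).card
      = e.2.card := by
    rw [card_filter_lt_fin m (m - e.1.card) (Nat.sub_le _ _), he2]
  have hFc : ((univ : Finset (Fin m)).filter (fun j : Fin m => (j : ℕ) < m - e.1.card))ᶜ.card
      = e.1.card := by
    rw [Finset.card_compl, hF, Fintype.card_fin, ← hm, Nat.add_sub_cancel]
  rw [filter_ge_eq_compl m (m - e.1.card)]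
  rw [edge_term _ e.2 e.1 hF hFc hdis.symm _ x]
  rw [Finset.union_comm e.2 e.1]
  have hfac : Nat.factorial e.2.card = e.2.card * Nat.factorial (e.2.card - 1) :=
    (Nat.mul_factorial_pred (by omega : e.2.card ≠ 0)).symm
  have he21 : m - e.1.card - 1 = e.2.card - 1 := by omega
  rw [he21, hfac]
  have h1 : ((Nat.factorial (e.2.card - 1) : ℕ) : ℝ) ≠ 0 := by
    exact_mod_cast (Nat.factorial_pos _).ne'
  have h2 : ((Nat.factorial e.1.card : ℕ) : ℝ) ≠ 0 := by
    exact_mod_cast (Nat.factorial_pos _).ne'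
  push_cast
  field_simp


/-- For a directed `m`-uniform hypergraph `H`, the
Laplacian hypermatrix `L_H = L_H⁺ + L_H⁻` is copositive. -/
theorem laplacian_copositive {m n : ℕ} (H : DirHypergraph n) (hH : H.IsUniform m) :
    Copositive (fun f => (diagHM m (fun v => (outDeg H v : ℝ)) f - outAdj m H f) +
      (diagHM m (fun v => (inDeg H v : ℝ)) f - inAdj m H f)) := by
  classical
  intro x hx
  have hsplit : formEval (fun f => (diagHM m (fun v => (outDeg H v : ℝ)) f - outAdj m H f) +
      (diagHM m (fun v => (inDeg H v : ℝ)) f - inAdj m H f)) x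
      = (formEval (diagHM m (fun v => (outDeg H v : ℝ))) x - formEval (outAdj m H) x)
        + (formEval (diagHM m (fun v => (inDeg H v : ℝ))) x - formEval (inAdj m H) x) := by
    unfold formEval
    rw [← Finset.sum_sub_distrib, ← Finset.sum_sub_distrib, ← Finset.sum_add_distrib]
    refine Finset.sum_congr rfl fun f _ => ?_
    ring
  rw [hsplit, formEval_diag, formEval_diag, formEval_outAdj H hH x, formEval_inAdj H hH x]
  have hout : ∑ i, (outDeg H i : ℝ) * x i ^ m
      = ∑ e ∈ H.edges, ∑ v ∈ e.1, x v ^ m := by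
    simpa only [outDeg] using deg_sum m H (fun e => e.1) x
  have hin : ∑ i, (inDeg H i : ℝ) * x i ^ m
      = ∑ e ∈ H.edges, ∑ v ∈ e.2, x v ^ m := by
    simpa only [inDeg] using deg_sum m H (fun e => e.2) x
  rw [hout, hin]
  rw [← Finset.sum_sub_distrib, ← Finset.sum_sub_distrib, ← Finset.sum_add_distrib]
  refine Finset.sum_nonneg fun e he => ?_
  have hdis := H.tail_head_disjoint e he
  have hm : (e.1 ∪ e.2).card = m := hH e he
  have key := amgm_card (e.1 ∪ e.2) x hx
  rw [hm] at key
  have hsum : ∑ v ∈ e.1 ∪ e.2, x v ^ m = (∑ v ∈ e.1, x v ^ m) + ∑ v ∈ e.2, x v ^ m :=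
    Finset.sum_union hdis
  have hcard : (e.1.card : ℝ) + (e.2.card : ℝ) = ((e.1 ∪ e.2).card : ℝ) := by
    rw [Finset.card_union_of_disjoint hdis]; push_cast; ring
  have hmr : ((e.1.card : ℝ) + (e.2.card : ℝ)) = (m : ℝ) := by
    rw [hcard]; exact_mod_cast congrArg Nat.cast hm
  have hprod : (e.1.card : ℝ) * ∏ v ∈ e.1 ∪ e.2, x v + (e.2.card : ℝ) * ∏ v ∈ e.1 ∪ e.2, x v
      = (m : ℝ) * ∏ v ∈ e.1 ∪ e.2, x v := by rw [← add_mul, hmr]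
  linarith [key, hsum, hprod]
end

section
/- Let H be a directed hypergraph on n vertices with m.c.e(H) = m and out-Laplacian hypermatrix L_H⁺ = D_H⁺ − A_H⁺. Then: (i) 0 is an H-eigenvalue of L_H⁺, with the all-ones vector as eigenvector, and 0 is also a Z-eigenvalue of L_H⁺ (with eigenvector the normalized all-ones vector); (ii) ρ(L_H⁺) ≤ 2Δ⁺. -/
open Finset

variable {n : ℕ}

lemma card_filter_subtype_eq {γ β : Type*} [Fintype γ] [DecidableEq γ] [DecidableEq β]
    (T : Finset γ) (g : γ → β) (b : β) (hb : ∀ x ∈ T, g x ≠ b) :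
    (Finset.univ.filter fun x : {x // x ∉ T} => g x.val = b).card
      = (Finset.univ.filter fun x : γ => g x = b).card := by
  apply Finset.card_bij (fun x _ => x.1)
  · intro x hx
    simp only [mem_filter, mem_univ, true_and] at hx ⊢
    exact hx
  · intro x hx y hy hxy; exact Subtype.ext hxy
  · intro x hx
    simp only [mem_filter, mem_univ, true_and] at hx
    have hxT : x ∉ T := fun h => hb x h hx
    exact ⟨⟨x, hxT⟩, by simp [hx], rfl⟩

lemma card_fiber_multinomial {β : Type} [Fintype β] [DecidableEq β] (S : Finset β) :
    ∀ (c : β → ℕ) (γ : Type) [Fintype γ] [DecidableEq γ],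
      Fintype.card γ = ∑ b ∈ S, c b →
      (Finset.univ.filter fun g : γ → β =>
        (∀ x, g x ∈ S) ∧ ∀ b ∈ S, (Finset.univ.filter fun x => g x = b).card = c b).card
        = Nat.multinomial S c := by
  classical
  induction S using Finset.cons_induction with
  | empty =>
    intro c γ _ _ hγ
    simp only [Finset.sum_empty] at hγ
    rw [Finset.filter_true_of_mem, Finset.card_univ, Fintype.card_fun, hγ]
    · simp
    · intro g _
      constructor
      · intro x
        exact absurd (Fintype.card_pos_iff.mpr ⟨x⟩) (by omega)
      · intro b hb; simp at hb
  | cons a S' ha IH =>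
    intro c γ _ _ hγ
    rw [Finset.sum_cons] at hγ
    rw [Finset.card_eq_sum_card_fiberwise
      (f := fun g : γ → β => Finset.univ.filter fun x => g x = a)
      (t := Finset.powersetCard (c a) Finset.univ)
      (by
        intro g hg
        simp only [Finset.mem_coe, mem_filter, mem_univ, true_and] at hg
        rw [Finset.mem_coe, Finset.mem_powersetCard_univ]
        exact hg.2 a (Finset.mem_cons_self a S'))]
    have key : ∀ T ∈ Finset.powersetCard (c a) Finset.univ,
        ((Finset.univ.filter fun g : γ → β =>
          (∀ x, g x ∈ Finset.cons a S' ha) ∧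
            ∀ b ∈ Finset.cons a S' ha,
              (Finset.univ.filter fun x => g x = b).card = c b).filter
          (fun g => Finset.univ.filter (fun x => g x = a) = T)).card
        = Nat.multinomial S' c := by
      intro T hT
      rw [Finset.mem_powersetCard_univ] at hT
      have hcard' : Fintype.card {x : γ // x ∉ T} = ∑ b ∈ S', c b := by
        have h1 : Fintype.card {x : γ // x ∈ T} = T.card := Fintype.card_coe T
        have h2 := Fintype.card_subtype_compl (p := fun x : γ => x ∈ T)
        rw [h2, h1, hT]
        omega
      rw [← IH c {x : γ // x ∉ T} hcard']
      apply Finset.card_bij' (fun g _ => fun x : {x // x ∉ T} => g x.val)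
        (fun g' _ => fun x : γ => if h : x ∈ T then a else g' ⟨x, h⟩)
      · -- maps into IH set
        intro g hg
        simp only [mem_filter, mem_univ, true_and] at hg ⊢
        obtain ⟨⟨hmem, hfib⟩, hTfib⟩ := hg
        have hnota : ∀ x : {x // x ∉ T}, g x.val ≠ a := by
          intro x hxa
          exact x.2 (hTfib ▸ (by simp [hxa]))
        constructor
        · intro x
          have := hmem x.val
          rw [Finset.mem_cons] at this
          exact this.resolve_left (hnota x)
        · intro b hb
          have hba : b ≠ a := fun h => ha (h ▸ hb)
          rw [card_filter_subtype_eq T g b (by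
            intro x hx hxb
            have : x ∈ Finset.univ.filter fun x => g x = a := hTfib ▸ hx
            simp only [mem_filter, mem_univ, true_and] at this
            exact hba (hxb ▸ this))]
          exact hfib b (Finset.mem_cons_of_mem hb)
      · -- maps back
        intro g' hg'
        simp only [mem_filter, mem_univ, true_and] at hg' ⊢
        obtain ⟨h1, h2⟩ := hg'
        have hfibA : (Finset.univ.filter fun x : γ =>
            (if h : x ∈ T then a else g' ⟨x, h⟩) = a) = T := by
          ext x
          simp only [mem_filter, mem_univ, true_and]
          constructor
          · intro hx
            by_contra hxT
            rw [dif_neg hxT] at hx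
            exact ha (hx ▸ h1 ⟨x, hxT⟩)
          · intro hx; rw [dif_pos hx]
        refine ⟨⟨?_, ?_⟩, hfibA⟩
        · intro x
          by_cases h : x ∈ T
          · rw [dif_pos h]; exact Finset.mem_cons_self a S'
          · rw [dif_neg h]; exact Finset.mem_cons_of_mem (h1 ⟨x, h⟩)
        · intro b hb
          rw [Finset.mem_cons] at hb
          rcases hb with rfl | hb
          · rw [hfibA, hT]
          · have hba : b ≠ a := fun h => ha (h ▸ hb)
            rw [← card_filter_subtype_eq T _ b (by
              intro x hx hxb
              rw [dif_pos hx] at hxb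
              exact hba hxb.symm)]
            rw [← h2 b hb]
            congr 1
            ext x
            simp only [mem_filter, mem_univ, true_and]
            rw [dif_neg x.2]
      · -- left inverse
        intro g hg
        simp only [mem_filter, mem_univ, true_and] at hg
        obtain ⟨⟨hmem, hfib⟩, hTfib⟩ := hg
        funext x
        by_cases h : x ∈ T
        · rw [dif_pos h]
          have : x ∈ Finset.univ.filter fun x => g x = a := hTfib ▸ h
          simp only [mem_filter, mem_univ, true_and] at this
          exact this.symm
        · rw [dif_neg h]
      · -- right inverse
        intro g' hg'
        funext x
        simp only
        rw [dif_neg x.2]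
    rw [Finset.sum_congr rfl key, Finset.sum_const, Finset.card_powersetCard,
      Finset.card_univ, hγ, smul_eq_mul, Nat.multinomial_cons]

lemma card_image_eq_multinomial_sum {β : Type} [Fintype β] [LinearOrder β] [DecidableEq β] (S : Finset β)
    (γ : Type) [Fintype γ] [DecidableEq γ] :
    (Finset.univ.filter fun g : γ → β => Finset.univ.image g = S).card
      = ∑ c ∈ (Finset.Nat.antidiagonalTuple S.card (Fintype.card γ)).filter
          (fun c => ∀ i, 1 ≤ c i), Nat.multinomial Finset.univ c := by
  classical
  set k := S.card with hk
  set σ : Fin k → β := fun j => S.orderEmbOfFin rfl j with hσ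
  have hσ_mem : ∀ j, σ j ∈ S := fun j => Finset.orderEmbOfFin_mem S rfl j
  have hσ_inj : Function.Injective σ := (S.orderEmbOfFin rfl).injective
  have himg : Finset.univ.image σ = S := by
    apply Finset.eq_of_subset_of_card_le
    · intro b hb
      rw [Finset.mem_image] at hb
      obtain ⟨j, _, rfl⟩ := hb
      exact hσ_mem j
    · rw [Finset.card_image_of_injective _ hσ_inj, Finset.card_univ, Fintype.card_fin]
  have hsurj : ∀ b ∈ S, ∃ j : Fin k, σ j = b := by
    intro b hb
    rw [← himg, Finset.mem_image] at hb
    obtain ⟨j, _, hj⟩ := hb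
    exact ⟨j, hj⟩
  rw [Finset.card_eq_sum_card_fiberwise
    (f := fun g : γ → β => fun j : Fin k => (Finset.univ.filter fun x => g x = σ j).card)
    (t := (Finset.Nat.antidiagonalTuple k (Fintype.card γ)).filter (fun c => ∀ i, 1 ≤ c i))
    (by
      intro g hg
      simp only [Finset.mem_coe, mem_filter, mem_univ, true_and] at hg
      rw [Finset.mem_coe, Finset.mem_filter, Finset.Nat.mem_antidiagonalTuple]
      constructor
      · calc ∑ j : Fin k, (Finset.univ.filter fun x => g x = σ j).card
            = ∑ b ∈ Finset.univ.image σ, (Finset.univ.filter fun x => g x = b).card := by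
              rw [Finset.sum_image (fun x _ y _ h => hσ_inj h)]
          _ = ∑ b ∈ Finset.univ.image g, (Finset.univ.filter fun x => g x = b).card := by
              rw [himg, hg]
          _ = (Finset.univ : Finset γ).card := (Finset.card_eq_sum_card_image g _).symm
          _ = Fintype.card γ := Finset.card_univ
      · intro j
        rw [Nat.one_le_iff_ne_zero, ← Nat.pos_iff_ne_zero, Finset.card_pos]
        have : σ j ∈ Finset.univ.image g := hg ▸ hσ_mem j
        rw [Finset.mem_image] at this
        obtain ⟨x, _, hx⟩ := this
        exact ⟨x, by simp [hx]⟩)]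
  apply Finset.sum_congr rfl
  intro c hc
  simp only [Finset.mem_filter, Finset.Nat.mem_antidiagonalTuple] at hc
  obtain ⟨hcsum, hcpos⟩ := hc
  set cb : β → ℕ := fun b => if hb : b ∈ S then c ((S.orderIsoOfFin rfl).symm ⟨b, hb⟩) else 0
    with hcb
  have hcbσ : ∀ j, cb (σ j) = c j := by
    intro j
    have hmem := hσ_mem j
    rw [hcb]
    dsimp only
    rw [dif_pos hmem]
    congr 1
    have h1 : (⟨σ j, hmem⟩ : {x // x ∈ S}) = S.orderIsoOfFin rfl j := Subtype.ext rfl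
    rw [h1, OrderIso.symm_apply_apply]
  have hcbpos : ∀ b ∈ S, 1 ≤ cb b := by
    intro b hb
    rw [hcb]
    dsimp only
    rw [dif_pos hb]
    exact hcpos _
  have hsum_cb : ∑ b ∈ S, cb b = Fintype.card γ := by
    rw [← himg, Finset.sum_image (fun x _ y _ h => hσ_inj h)]
    simp only [hcbσ]
    exact hcsum
  have hset : ((Finset.univ.filter fun g : γ → β => Finset.univ.image g = S).filter
        (fun g => (fun j : Fin k => (Finset.univ.filter fun x => g x = σ j).card) = c))
      = (Finset.univ.filter fun g : γ → β =>
        (∀ x, g x ∈ S) ∧ ∀ b ∈ S, (Finset.univ.filter fun x => g x = b).card = cb b) := by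
    ext g
    simp only [Finset.mem_filter, Finset.mem_univ, true_and]
    constructor
    · rintro ⟨himg_g, hclass⟩
      constructor
      · intro x
        rw [← himg_g]
        exact Finset.mem_image_of_mem g (Finset.mem_univ x)
      · intro b hb
        obtain ⟨j, rfl⟩ := hsurj b hb
        rw [congrFun hclass j, hcbσ]
    · rintro ⟨h1, h2⟩
      constructor
      · apply Finset.Subset.antisymm
        · exact Finset.image_subset_iff.mpr fun x _ => h1 x
        · intro b hb
          have hpos : 0 < (Finset.univ.filter fun x => g x = b).card := by
            rw [h2 b hb]; exact hcbpos b hb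
          rw [Finset.card_pos] at hpos
          obtain ⟨x, hx⟩ := hpos
          simp only [Finset.mem_filter] at hx
          exact hx.2 ▸ Finset.mem_image_of_mem g (Finset.mem_univ x)
      · funext j
        rw [h2 (σ j) (hσ_mem j), hcbσ]
  rw [hset, card_fiber_multinomial S cb γ hsum_cb.symm]
  unfold Nat.multinomial
  rw [← himg, Finset.sum_image (fun x _ y _ h => hσ_inj h),
    Finset.prod_image (fun x _ y _ h => hσ_inj h)]
  simp only [hcbσ]

lemma card_filter_split {γ β : Type*} [Fintype γ] [Fintype β] [DecidableEq γ] [DecidableEq β]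
    (p : γ → Prop) [DecidablePred p]
    (q1 : ({x // p x} → β) → Prop) [DecidablePred q1]
    (q2 : ({x // ¬ p x} → β) → Prop) [DecidablePred q2] :
    (Finset.univ.filter fun f : γ → β =>
        q1 (fun x => f x.val) ∧ q2 (fun x => f x.val)).card
      = (Finset.univ.filter q1).card * (Finset.univ.filter q2).card := by
  classical
  rw [← Finset.card_product]
  refine Finset.card_bij' (fun f _ => ((fun x => f x.val), (fun x => f x.val)))
    (fun gp _ => fun x => if h : p x then gp.1 ⟨x, h⟩ else gp.2 ⟨x, h⟩) ?_ ?_ ?_ ?_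
  · intro f hf
    simp only [Finset.mem_filter, Finset.mem_univ, true_and] at hf
    simp only [Finset.mem_product, Finset.mem_filter, Finset.mem_univ, true_and]
    exact hf
  · intro gp hgp
    simp only [Finset.mem_product, Finset.mem_filter, Finset.mem_univ, true_and] at hgp
    simp only [Finset.mem_filter, Finset.mem_univ, true_and]
    constructor
    · have : (fun x : {x // p x} =>
          (if h : p x.val then gp.1 ⟨x.val, h⟩ else gp.2 ⟨x.val, h⟩)) = gp.1 := by
        funext x; rw [dif_pos x.2]
      rw [this]; exact hgp.1
    · have : (fun x : {x // ¬ p x} =>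
          (if h : p x.val then gp.1 ⟨x.val, h⟩ else gp.2 ⟨x.val, h⟩)) = gp.2 := by
        funext x; rw [dif_neg x.2]
      rw [this]; exact hgp.2
  · intro f _
    funext x
    by_cases h : p x
    · simp only [dif_pos h]
    · simp only [dif_neg h]
  · intro gp _
    ext x
    · simp only [dif_pos x.2]
    · simp only [dif_neg x.2]

lemma image_filter_eq_subtype {γ β : Type*} [Fintype γ] [DecidableEq γ] [DecidableEq β]
    (p : γ → Prop) [DecidablePred p] (f : γ → β) :
    (Finset.univ.filter p).image f = Finset.univ.image (fun x : {x // p x} => f x.val) := by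
  ext b
  simp only [Finset.mem_image, Finset.mem_filter, Finset.mem_univ, true_and, Subtype.exists]
  aesop

lemma card_filter_fin_lt {m t : ℕ} (ht : t ≤ m) :
    (Finset.univ.filter fun j : Fin m => (j : ℕ) < t).card = t := by
  have h := Finset.card_bij (s := Finset.univ.filter fun j : Fin m => (j : ℕ) < t)
    (t := Finset.range t) (fun j _ => (j : ℕ))
    (by intro j hj
        simp only [Finset.mem_filter] at hj
        exact Finset.mem_range.mpr hj.2)
    (by intro a _ b _ h; exact Fin.ext h)
    (by intro a ha
        rw [Finset.mem_range] at ha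
        exact ⟨⟨a, lt_of_lt_of_le ha ht⟩, by simp [ha], rfl⟩)
  rw [h, Finset.card_range]

lemma card_filter_fin_ge {m t : ℕ} :
    (Finset.univ.filter fun j : Fin m => ¬ ((j : ℕ) < t)).card = m - min t m := by
  have := Finset.card_filter_add_card_filter_not
    (s := (Finset.univ : Finset (Fin m))) (p := fun j : Fin m => (j : ℕ) < t)
  rw [Finset.card_univ, Fintype.card_fin] at this
  rcases le_total t m with h | h
  · rw [min_eq_left h]
    have h2 := card_filter_fin_lt (m := m) h
    omega
  · rw [min_eq_right h]
    have h2 : (Finset.univ.filter fun j : Fin m => (j : ℕ) < t).card = m := by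
      rw [Finset.filter_true_of_mem, Finset.card_univ, Fintype.card_fin]
      intro j _; exact lt_of_lt_of_le j.isLt h
    omega

lemma count_pattern_t {m n t : ℕ} (S1 S2 : Finset (Fin n)) (ht : t ≤ m) :
    (Finset.univ.filter fun f : Fin m → Fin n =>
        ((Finset.univ.filter fun j : Fin m => (j : ℕ) < t).image f = S1 ∧
         (Finset.univ.filter fun j : Fin m => t ≤ (j : ℕ)).image f = S2)).card
      = (∑ c ∈ (Finset.Nat.antidiagonalTuple S1.card t).filter (fun c => ∀ i, 1 ≤ c i),
          Nat.multinomial Finset.univ c) *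
        (∑ c ∈ (Finset.Nat.antidiagonalTuple S2.card (m - t)).filter (fun c => ∀ i, 1 ≤ c i),
          Nat.multinomial Finset.univ c) := by
  classical
  have hge : (Finset.univ.filter fun j : Fin m => t ≤ (j : ℕ))
      = Finset.univ.filter (fun j : Fin m => ¬ ((j : ℕ) < t)) := by
    apply Finset.filter_congr
    intro j _
    simp [not_lt]
  have hc1 : Fintype.card {j : Fin m // (j : ℕ) < t} = t := by
    rw [Fintype.card_subtype, card_filter_fin_lt ht]
  have hc2 : Fintype.card {j : Fin m // ¬ ((j : ℕ) < t)} = m - t := by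
    rw [Fintype.card_subtype, card_filter_fin_ge, min_eq_left ht]
  calc (Finset.univ.filter fun f : Fin m → Fin n =>
        ((Finset.univ.filter fun j : Fin m => (j : ℕ) < t).image f = S1 ∧
         (Finset.univ.filter fun j : Fin m => t ≤ (j : ℕ)).image f = S2)).card
      = (Finset.univ.filter fun f : Fin m → Fin n =>
          (Finset.univ.image (fun x : {j : Fin m // (j : ℕ) < t} => f x.val) = S1 ∧
           Finset.univ.image (fun x : {j : Fin m // ¬ ((j : ℕ) < t)} => f x.val) = S2)).card := by
        congr 1
        apply Finset.filter_congr
        intro f _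
        rw [hge, image_filter_eq_subtype, image_filter_eq_subtype]
    _ = (Finset.univ.filter fun g : {j : Fin m // (j : ℕ) < t} → Fin n =>
          Finset.univ.image g = S1).card *
        (Finset.univ.filter fun g : {j : Fin m // ¬ ((j : ℕ) < t)} → Fin n =>
          Finset.univ.image g = S2).card :=
        card_filter_split (fun j : Fin m => (j : ℕ) < t)
          (fun g => Finset.univ.image g = S1) (fun g => Finset.univ.image g = S2)
    _ = _ := by
        rw [show (Finset.univ.filter fun g : {j : Fin m // (j : ℕ) < t} → Fin n =>
            Finset.univ.image g = S1).card
          = _ from card_image_eq_multinomial_sum S1 {j : Fin m // (j : ℕ) < t},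
          show (Finset.univ.filter fun g : {j : Fin m // ¬ ((j : ℕ) < t)} → Fin n =>
            Finset.univ.image g = S2).card
          = _ from card_image_eq_multinomial_sum S2 {j : Fin m // ¬ ((j : ℕ) < t)}, hc1, hc2]

lemma edge_total {m n : ℕ} (S1 S2 : Finset (Fin n)) (hs : S1.card + S2.card ≤ m) :
    ∑ t ∈ Finset.Icc S1.card (m - (S1.card + S2.card) + S1.card),
      (Finset.univ.filter fun f : Fin m → Fin n =>
        ((Finset.univ.filter fun j : Fin m => (j : ℕ) < t).image f = S1 ∧
         (Finset.univ.filter fun j : Fin m => t ≤ (j : ℕ)).image f = S2)).card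
    = alphaVal m S1.card (S1.card + S2.card) := by
  rw [← Finset.Ico_add_one_right_eq_Icc, Finset.sum_Ico_eq_sum_range]
  unfold alphaVal
  rw [show m - (S1.card + S2.card) + S1.card + 1 - S1.card
      = m - (S1.card + S2.card) + 1 from by omega]
  apply Finset.sum_congr rfl
  intro r hr
  rw [Finset.mem_range] at hr
  have e1 : S1.card + r = r + S1.card := Nat.add_comm _ _
  have e2 : m - (r + S1.card) = m - S1.card - r := by omega
  have e3 : S1.card + S2.card - S1.card = S2.card := by omega
  rw [e1, count_pattern_t S1 S2 (show r + S1.card ≤ m by omega), e2, e3]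

lemma image_swap_self {α : Type*} [DecidableEq α] (S : Finset α) {a b : α}
    (ha : a ∈ S) (hb : b ∈ S) : S.image (Equiv.swap a b) = S := by
  apply Finset.eq_of_subset_of_card_le
  · intro x hx
    rw [Finset.mem_image] at hx
    obtain ⟨y, hy, rfl⟩ := hx
    by_cases h1 : y = a
    · subst h1; rw [Equiv.swap_apply_left]; exact hb
    · by_cases h2 : y = b
      · subst h2; rw [Equiv.swap_apply_right]; exact ha
      · rw [Equiv.swap_apply_of_ne_of_ne h1 h2]; exact hy
  · rw [Finset.card_image_of_injective _ (Equiv.injective _)]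

lemma image_swap_not_mem {α : Type*} [DecidableEq α] (S : Finset α) {a b : α}
    (ha : a ∉ S) (hb : b ∉ S) : S.image (Equiv.swap a b) = S := by
  have : ∀ x ∈ S, Equiv.swap a b x = x := by
    intro x hx
    exact Equiv.swap_apply_of_ne_of_ne (fun h => ha (h ▸ hx)) (fun h => hb (h ▸ hx))
  rw [Finset.image_congr (fun x hx => this x hx), Finset.image_id']

lemma count_fiber_swap {m n t : ℕ} (hm : 0 < m) (S1 S2 : Finset (Fin n))
    (hdisj : Disjoint S1 S2) {b i : Fin n} (hb : b ∈ S1) (hi : i ∈ S1) :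
    (Finset.univ.filter (fun f : Fin m → Fin n =>
        ((Finset.univ.filter fun j : Fin m => (j : ℕ) < t).image f = S1 ∧
         (Finset.univ.filter fun j : Fin m => t ≤ (j : ℕ)).image f = S2) ∧ f ⟨0, hm⟩ = b)).card
    = (Finset.univ.filter (fun f : Fin m → Fin n =>
        ((Finset.univ.filter fun j : Fin m => (j : ℕ) < t).image f = S1 ∧
         (Finset.univ.filter fun j : Fin m => t ≤ (j : ℕ)).image f = S2) ∧ f ⟨0, hm⟩ = i)).card := by
  classical
  have hbS2 : b ∉ S2 := fun h => (Finset.disjoint_left.mp hdisj) hb h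
  have hiS2 : i ∉ S2 := fun h => (Finset.disjoint_left.mp hdisj) hi h
  have key : ∀ f : Fin m → Fin n,
      ((Finset.univ.filter fun j : Fin m => (j : ℕ) < t).image f = S1 ∧
       (Finset.univ.filter fun j : Fin m => t ≤ (j : ℕ)).image f = S2) →
      ((Finset.univ.filter fun j : Fin m => (j : ℕ) < t).image (⇑(Equiv.swap b i) ∘ f) = S1 ∧
       (Finset.univ.filter fun j : Fin m => t ≤ (j : ℕ)).image (⇑(Equiv.swap b i) ∘ f) = S2) := by
    rintro f ⟨h1, h2⟩
    constructor
    · rw [← Finset.image_image, h1, image_swap_self S1 hb hi]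
    · rw [← Finset.image_image, h2, image_swap_not_mem S2 hbS2 hiS2]
  refine Finset.card_bij' (fun f _ => ⇑(Equiv.swap b i) ∘ f) (fun f _ => ⇑(Equiv.swap b i) ∘ f)
    ?_ ?_ ?_ ?_
  · intro f hf
    simp only [Finset.mem_filter, Finset.mem_univ, true_and] at hf ⊢
    refine ⟨key f hf.1, ?_⟩
    simp only [Function.comp_apply, hf.2, Equiv.swap_apply_left]
  · intro f hf
    simp only [Finset.mem_filter, Finset.mem_univ, true_and] at hf ⊢
    refine ⟨key f hf.1, ?_⟩
    simp only [Function.comp_apply, hf.2, Equiv.swap_apply_right]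
  · intro f _
    funext x
    simp [Equiv.swap_apply_self]
  · intro f _
    funext x
    simp [Equiv.swap_apply_self]

lemma count_pattern_fiber {m n t : ℕ} (hm : 0 < m) (S1 S2 : Finset (Fin n))
    (hdisj : Disjoint S1 S2) (ht : 1 ≤ t) (i : Fin n) (hi : i ∈ S1) :
    S1.card * (Finset.univ.filter (fun f : Fin m → Fin n =>
        ((Finset.univ.filter fun j : Fin m => (j : ℕ) < t).image f = S1 ∧
         (Finset.univ.filter fun j : Fin m => t ≤ (j : ℕ)).image f = S2) ∧ f ⟨0, hm⟩ = i)).card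
    = (Finset.univ.filter (fun f : Fin m → Fin n =>
        ((Finset.univ.filter fun j : Fin m => (j : ℕ) < t).image f = S1 ∧
         (Finset.univ.filter fun j : Fin m => t ≤ (j : ℕ)).image f = S2))).card := by
  classical
  have hmaps : ∀ f ∈ (Finset.univ.filter (fun f : Fin m → Fin n =>
      ((Finset.univ.filter fun j : Fin m => (j : ℕ) < t).image f = S1 ∧
       (Finset.univ.filter fun j : Fin m => t ≤ (j : ℕ)).image f = S2))),
      f ⟨0, hm⟩ ∈ S1 := by
    intro f hf
    simp only [Finset.mem_filter, Finset.mem_univ, true_and] at hf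
    rw [← hf.1]
    apply Finset.mem_image_of_mem
    simp only [Finset.mem_filter, Finset.mem_univ, true_and]
    exact ht
  conv_rhs => rw [Finset.card_eq_sum_card_fiberwise hmaps]
  rw [Finset.sum_congr rfl (fun b hb =>
    (congrArg Finset.card (Finset.filter_filter _ _ _)).trans (count_fiber_swap hm S1 S2 hdisj hb hi)),
    Finset.sum_const, smul_eq_mul]



lemma exists_pattern {m n : ℕ} (S1 S2 : Finset (Fin n)) (h1 : S1.Nonempty) (h2 : S2.Nonempty)
    (hs : S1.card + S2.card ≤ m) :
    0 < (Finset.univ.filter fun f : Fin m → Fin n =>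
        ((Finset.univ.filter fun j : Fin m => (j : ℕ) < S1.card).image f = S1 ∧
         (Finset.univ.filter fun j : Fin m => S1.card ≤ (j : ℕ)).image f = S2)).card := by
  classical
  have hk : 1 ≤ S1.card := Finset.card_pos.mpr h1
  have hs2 : 1 ≤ S2.card := Finset.card_pos.mpr h2
  rw [Finset.card_pos]
  refine ⟨fun j => if h : (j : ℕ) < S1.card then S1.orderEmbOfFin rfl ⟨j, h⟩
    else S2.orderEmbOfFin rfl ⟨min ((j : ℕ) - S1.card) (S2.card - 1),
      lt_of_le_of_lt (min_le_right _ _) (by omega)⟩, ?_⟩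
  simp only [Finset.mem_filter, Finset.mem_univ, true_and]
  constructor
  · ext b
    simp only [Finset.mem_image, Finset.mem_filter, Finset.mem_univ, true_and]
    constructor
    · rintro ⟨j, hj, rfl⟩
      rw [dif_pos hj]
      exact Finset.orderEmbOfFin_mem S1 rfl _
    · intro hb
      have hrange : b ∈ Set.range (S1.orderEmbOfFin rfl) := by
        rw [Finset.range_orderEmbOfFin]; exact hb
      obtain ⟨j0, hj0⟩ := hrange
      have hlt : (j0 : ℕ) < S1.card := j0.isLt
      refine ⟨⟨(j0 : ℕ), by omega⟩, hlt, ?_⟩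
      rw [dif_pos hlt, ← hj0]
  · ext b
    simp only [Finset.mem_image, Finset.mem_filter, Finset.mem_univ, true_and]
    constructor
    · rintro ⟨j, hj, rfl⟩
      rw [dif_neg (by omega)]
      exact Finset.orderEmbOfFin_mem S2 rfl _
    · intro hb
      have hrange : b ∈ Set.range (S2.orderEmbOfFin rfl) := by
        rw [Finset.range_orderEmbOfFin]; exact hb
      obtain ⟨l, hl⟩ := hrange
      refine ⟨⟨S1.card + (l : ℕ), by omega⟩, by simp, ?_⟩
      rw [dif_neg (by simp)]
      rw [← hl]
      congr 1
      apply Fin.ext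
      show min (((⟨S1.card + (l : ℕ), by omega⟩ : Fin m) : ℕ) - S1.card) (S2.card - 1) = (l : ℕ)
      have h1 : ((⟨S1.card + (l : ℕ), by omega⟩ : Fin m) : ℕ) - S1.card = (l : ℕ) := by
        simp
      rw [h1]
      have := l.isLt
      exact Nat.min_eq_left (by omega)

lemma alphaVal_pos {m n : ℕ} (S1 S2 : Finset (Fin n)) (h1 : S1.Nonempty) (h2 : S2.Nonempty)
    (hs : S1.card + S2.card ≤ m) :
    0 < alphaVal m S1.card (S1.card + S2.card) := by
  rw [← edge_total S1 S2 hs]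
  refine lt_of_lt_of_le (exists_pattern S1 S2 h1 h2 hs)
    (Finset.single_le_sum (f := fun t => (Finset.univ.filter fun f : Fin m → Fin n =>
        ((Finset.univ.filter fun j : Fin m => (j : ℕ) < t).image f = S1 ∧
         (Finset.univ.filter fun j : Fin m => t ≤ (j : ℕ)).image f = S2)).card)
      (fun t _ => Nat.zero_le _) ?_)
  rw [Finset.mem_Icc]
  omega

lemma rowsum_outAdjNU {m n : ℕ} (hm : 0 < m) (H : DirHypergraph n) (hmce : H.mce m) (i : Fin n) :
    ∑ f ∈ Finset.univ.filter (fun f : Fin m → Fin n => f ⟨0, hm⟩ = i), outAdjNU m H f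
      = (outDeg H i : ℝ) := by
  classical
  simp only [outAdjNU]
  rw [Finset.sum_comm]
  have per_edge : ∀ e ∈ H.edges,
      (∑ f ∈ Finset.univ.filter (fun f : Fin m → Fin n => f ⟨0, hm⟩ = i),
        ∑ t ∈ Finset.Icc e.1.card (m - (e.1.card + e.2.card) + e.1.card),
          if ((Finset.univ.filter fun j : Fin m => (j : ℕ) < t).image f = e.1 ∧
              (Finset.univ.filter fun j : Fin m => t ≤ (j : ℕ)).image f = e.2)
          then (e.1.card : ℝ) / (alphaVal m e.1.card (e.1.card + e.2.card) : ℝ)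
          else 0)
      = if i ∈ e.1 then (1 : ℝ) else 0 := by
    intro e he
    have hd := H.tail_head_disjoint e he
    have hn1 := H.tail_nonempty e he
    have hn2 := H.head_nonempty e he
    have hk : 1 ≤ e.1.card := Finset.card_pos.mpr hn1
    have hcards : e.1.card + e.2.card ≤ m := by
      rw [← Finset.card_union_of_disjoint hd]
      exact hmce.1 e he
    have hαpos := alphaVal_pos e.1 e.2 hn1 hn2 hcards
    have hα : ((alphaVal m e.1.card (e.1.card + e.2.card) : ℝ)) ≠ 0 := by
      exact_mod_cast Nat.pos_iff_ne_zero.mp hαpos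
    rw [Finset.sum_comm]
    have step : ∀ t ∈ Finset.Icc e.1.card (m - (e.1.card + e.2.card) + e.1.card),
        (∑ f ∈ Finset.univ.filter (fun f : Fin m → Fin n => f ⟨0, hm⟩ = i),
          if ((Finset.univ.filter fun j : Fin m => (j : ℕ) < t).image f = e.1 ∧
              (Finset.univ.filter fun j : Fin m => t ≤ (j : ℕ)).image f = e.2)
          then (e.1.card : ℝ) / (alphaVal m e.1.card (e.1.card + e.2.card) : ℝ)
          else 0)
        = ((Finset.univ.filter (fun f : Fin m → Fin n =>
            ((Finset.univ.filter fun j : Fin m => (j : ℕ) < t).image f = e.1 ∧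
             (Finset.univ.filter fun j : Fin m => t ≤ (j : ℕ)).image f = e.2) ∧
            f ⟨0, hm⟩ = i)).card : ℝ)
          * ((e.1.card : ℝ) / (alphaVal m e.1.card (e.1.card + e.2.card) : ℝ)) := by
      intro t _
      rw [Finset.sum_ite, Finset.sum_const, Finset.sum_const_zero, add_zero,
        Finset.filter_filter, nsmul_eq_mul]
      congr 2
      exact congrArg Finset.card (Finset.filter_congr (fun f _ => by tauto))
    rw [Finset.sum_congr rfl step]
    by_cases hi : i ∈ e.1
    · rw [if_pos hi]
      rw [← Finset.sum_mul]
      have hsum : (∑ t ∈ Finset.Icc e.1.card (m - (e.1.card + e.2.card) + e.1.card),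
          ((Finset.univ.filter (fun f : Fin m → Fin n =>
            ((Finset.univ.filter fun j : Fin m => (j : ℕ) < t).image f = e.1 ∧
             (Finset.univ.filter fun j : Fin m => t ≤ (j : ℕ)).image f = e.2) ∧
            f ⟨0, hm⟩ = i)).card)) * e.1.card
          = alphaVal m e.1.card (e.1.card + e.2.card) := by
        rw [Finset.sum_mul, ← edge_total e.1 e.2 hcards]
        apply Finset.sum_congr rfl
        intro t ht
        rw [Finset.mem_Icc] at ht
        rw [mul_comm]
        exact count_pattern_fiber hm e.1 e.2 hd (le_trans hk ht.1) i hi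
      have : ((∑ t ∈ Finset.Icc e.1.card (m - (e.1.card + e.2.card) + e.1.card),
          ((Finset.univ.filter (fun f : Fin m → Fin n =>
            ((Finset.univ.filter fun j : Fin m => (j : ℕ) < t).image f = e.1 ∧
             (Finset.univ.filter fun j : Fin m => t ≤ (j : ℕ)).image f = e.2) ∧
            f ⟨0, hm⟩ = i)).card : ℕ) : ℝ)) * (e.1.card : ℝ)
          = (alphaVal m e.1.card (e.1.card + e.2.card) : ℝ) := by
        exact_mod_cast congrArg (fun x : ℕ => (x : ℝ)) hsum
      rw [← mul_div_assoc, this, div_self hα]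
    · rw [if_neg hi]
      apply Finset.sum_eq_zero
      intro t ht
      rw [Finset.mem_Icc] at ht
      convert zero_mul _
      norm_cast
      rw [Finset.card_eq_zero, Finset.filter_eq_empty_iff]
      rintro f - ⟨⟨hf1, _⟩, hf0⟩
      apply hi
      rw [← hf1, ← hf0]
      apply Finset.mem_image_of_mem
      simp only [Finset.mem_filter, Finset.mem_univ, true_and]
      omega
  rw [Finset.sum_congr rfl per_edge, Finset.sum_boole]
  rfl



lemma rowsum_diag {m n : ℕ} (hm : 0 < m) (d : Fin n → ℝ) (i : Fin n) :
    ∑ f ∈ Finset.univ.filter (fun f : Fin m → Fin n => f ⟨0, hm⟩ = i), diagHM m d f = d i := by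
  classical
  simp only [diagHM]
  rw [Finset.sum_comm]
  have step : ∀ v ∈ (Finset.univ : Finset (Fin n)),
      (∑ f ∈ Finset.univ.filter (fun f : Fin m → Fin n => f ⟨0, hm⟩ = i),
        if f = (fun _ => v) then d v else 0)
      = if v = i then d v else 0 := by
    intro v _
    rw [Finset.sum_ite_eq' (Finset.univ.filter (fun f : Fin m → Fin n => f ⟨0, hm⟩ = i))
      (fun _ => v) (fun _ => d v)]
    congr 1
    simp only [Finset.mem_filter, Finset.mem_univ, true_and, eq_iff_iff]
  rw [Finset.sum_congr rfl step, Finset.sum_ite_eq' Finset.univ i d]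
  simp

lemma outAdjNU_nonneg {m n : ℕ} (H : DirHypergraph n) (f : Fin m → Fin n) :
    0 ≤ outAdjNU m H f := by
  apply Finset.sum_nonneg
  intro e _
  apply Finset.sum_nonneg
  intro t _
  split
  · positivity
  · exact le_refl 0

lemma diagHM_nonneg {m n : ℕ} (d : Fin n → ℝ) (hd : ∀ v, 0 ≤ d v) (f : Fin m → Fin n) :
    0 ≤ diagHM m d f := by
  apply Finset.sum_nonneg
  intro v _
  split
  · exact hd v
  · exact le_refl 0

lemma rowsum_abs_le {m n : ℕ} (hm : 0 < m) (H : DirHypergraph n) (hmce : H.mce m) (i : Fin n) :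
    ∑ f ∈ Finset.univ.filter (fun f : Fin m → Fin n => f ⟨0, hm⟩ = i),
      |diagHM m (fun v => (outDeg H v : ℝ)) f - outAdjNU m H f|
      ≤ 2 * (outDeg H i : ℝ) := by
  classical
  have h1 : ∀ f : Fin m → Fin n,
      |diagHM m (fun v => (outDeg H v : ℝ)) f - outAdjNU m H f|
      ≤ diagHM m (fun v => (outDeg H v : ℝ)) f + outAdjNU m H f := by
    intro f
    have ha := diagHM_nonneg (fun v => (outDeg H v : ℝ)) (fun v => Nat.cast_nonneg _) f
    have hb := outAdjNU_nonneg H f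
    rw [abs_sub_le_iff]
    constructor <;> linarith
  calc ∑ f ∈ Finset.univ.filter (fun f : Fin m → Fin n => f ⟨0, hm⟩ = i),
        |diagHM m (fun v => (outDeg H v : ℝ)) f - outAdjNU m H f|
      ≤ ∑ f ∈ Finset.univ.filter (fun f : Fin m → Fin n => f ⟨0, hm⟩ = i),
        (diagHM m (fun v => (outDeg H v : ℝ)) f + outAdjNU m H f) :=
        Finset.sum_le_sum (fun f _ => h1 f)
    _ = 2 * (outDeg H i : ℝ) := by
        rw [Finset.sum_add_distrib, rowsum_diag hm _ i, rowsum_outAdjNU hm H hmce i]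
        ring

lemma rowsum_lap {m n : ℕ} (hm : 0 < m) (H : DirHypergraph n) (hmce : H.mce m) (i : Fin n) :
    ∑ f ∈ Finset.univ.filter (fun f : Fin m → Fin n => f ⟨0, hm⟩ = i),
      (diagHM m (fun v => (outDeg H v : ℝ)) f - outAdjNU m H f) = 0 := by
  rw [Finset.sum_sub_distrib, rowsum_diag hm _ i, rowsum_outAdjNU hm H hmce i, sub_self]


/-- For a directed hypergraph `H` with `m.c.e.(H) = m` and
out-Laplacian `L_H⁺ = D_H⁺ - A_H⁺`:  (i) `0` is an H-eigenvalue of `L_H⁺`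
with the all-ones eigenvector, and `0` is a Z-eigenvalue with the normalized
all-ones eigenvector;  (ii) `ρ(L_H⁺) ≤ 2Δ⁺`. -/
theorem outLaplacian_basic {m n : ℕ} (hm : 0 < m) (hn : 0 < n)
    (H : DirHypergraph n) (hmce : H.mce m) :
    (IsHEigenpair hm
        (fun f => diagHM m (fun v => (outDeg H v : ℝ)) f - outAdjNU m H f) 0
        (fun _ => 1) ∧
      IsZEigenpair hm
        (fun f => diagHM m (fun v => (outDeg H v : ℝ)) f - outAdjNU m H f) 0
        (fun _ => (Real.sqrt n)⁻¹)) ∧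
    specRad hm (fun f => diagHM m (fun v => (outDeg H v : ℝ)) f - outAdjNU m H f) ≤
      2 * maxOutDeg H := by
  classical
  have hcard_ne : (Finset.univ.filter (fun j : Fin m => j ≠ ⟨0, hm⟩)).card = m - 1 := by
    rw [Finset.filter_ne' Finset.univ (⟨0, hm⟩ : Fin m),
      Finset.card_erase_of_mem (Finset.mem_univ _), Finset.card_univ, Fintype.card_fin]
  have hbddAbove : BddAbove (Set.range fun v => (outDeg H v : ℝ)) :=
    Set.Finite.bddAbove (Set.finite_range _)
  have hmax_nonneg : 0 ≤ maxOutDeg H :=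
    le_trans (Nat.cast_nonneg (outDeg H ⟨0, hn⟩)) (le_csSup hbddAbove ⟨⟨0, hn⟩, rfl⟩)
  refine ⟨⟨?_, ?_⟩, ?_⟩
  · -- H-eigenpair
    constructor
    · intro h
      have := congrFun h ⟨0, hn⟩
      simp at this
    · intro i
      simp only [hmApply, Finset.prod_const_one, mul_one]
      rw [rowsum_lap hm H hmce i]
      simp
  · -- Z-eigenpair
    constructor
    · intro i
      simp only [hmApply, Finset.prod_const]
      rw [← Finset.sum_mul, rowsum_lap hm H hmce i, zero_mul, zero_mul]
    · rw [Finset.sum_const, Finset.card_univ, Fintype.card_fin, nsmul_eq_mul]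
      have hn0 : (0 : ℝ) < (n : ℝ) := by exact_mod_cast hn
      rw [inv_pow, Real.sq_sqrt (le_of_lt hn0), mul_inv_cancel₀ (ne_of_gt hn0)]
  · -- spectral radius bound
    apply Real.sSup_le
    · rintro r ⟨lam, ⟨x, hx0, hx⟩, rfl⟩
      obtain ⟨i, -, hmaxi⟩ := Finset.exists_max_image Finset.univ
        (fun i => ‖x i‖) ⟨⟨0, hn⟩, Finset.mem_univ _⟩
      set M := ‖x i‖ with hM
      have hMnonneg : 0 ≤ M := norm_nonneg _
      have hMpos : 0 < M := by
        rcases lt_or_eq_of_le hMnonneg with h | h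
        · exact h
        · exfalso
          apply hx0
          funext j
          have hj := hmaxi j (Finset.mem_univ j)
          rw [← h] at hj
          exact norm_eq_zero.mp (le_antisymm hj (norm_nonneg _))
      have heig := hx i
      have hbound : ‖lam‖ * M ^ (m - 1) ≤ (2 * (outDeg H i : ℝ)) * M ^ (m - 1) := by
        calc ‖lam‖ * M ^ (m - 1)
            = ‖lam * (x i) ^ (m - 1)‖ := by rw [norm_mul, norm_pow]
          _ = ‖hmApplyC hm
              (fun f => diagHM m (fun v => (outDeg H v : ℝ)) f - outAdjNU m H f) x i‖ := by
              rw [heig]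
          _ ≤ ∑ f ∈ Finset.univ.filter (fun f : Fin m → Fin n => f ⟨0, hm⟩ = i),
              |diagHM m (fun v => (outDeg H v : ℝ)) f - outAdjNU m H f| * M ^ (m - 1) := by
              simp only [hmApplyC]
              refine le_trans (norm_sum_le _ _) (Finset.sum_le_sum ?_)
              intro f _
              rw [norm_mul, Complex.norm_real, Real.norm_eq_abs, norm_prod]
              apply mul_le_mul_of_nonneg_left _ (abs_nonneg _)
              calc ∏ j ∈ Finset.univ.filter (fun j : Fin m => j ≠ ⟨0, hm⟩),
                    ‖x (f j)‖
                  ≤ ∏ j ∈ Finset.univ.filter (fun j : Fin m => j ≠ ⟨0, hm⟩), M :=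
                    Finset.prod_le_prod (fun j _ => norm_nonneg _)
                      (fun j _ => hmaxi (f j) (Finset.mem_univ _))
                _ = M ^ (m - 1) := by rw [Finset.prod_const, hcard_ne]
          _ = (∑ f ∈ Finset.univ.filter (fun f : Fin m → Fin n => f ⟨0, hm⟩ = i),
              |diagHM m (fun v => (outDeg H v : ℝ)) f - outAdjNU m H f|) * M ^ (m - 1) := by
              rw [Finset.sum_mul]
          _ ≤ (2 * (outDeg H i : ℝ)) * M ^ (m - 1) :=
              mul_le_mul_of_nonneg_right (rowsum_abs_le hm H hmce i)
                (pow_nonneg hMnonneg _)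
      have hlam : ‖lam‖ ≤ 2 * (outDeg H i : ℝ) :=
        le_of_mul_le_mul_right hbound (pow_pos hMpos _)
      refine le_trans hlam ?_
      have : (outDeg H i : ℝ) ≤ maxOutDeg H := le_csSup hbddAbove ⟨i, rfl⟩
      linarith
    · linarith
end
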